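/- Suppose additionally that every value in each S_t has the form ε²T/(1+ε)^i for some integer i ≥ 0. If MILP(T̄) has a feasible solution (z integral, x possibly fractional), then MILP(T̄ + εT + ε²T) has an integral feasible solution, where the configuration sets 𝒞_t are unchanged (still defined by size(C) ≤ T̄). -/

import Mathlib

open Finset
open scoped Classical ENNReal

noncomputable section

variable {J : Type*} [Fintype J] {K : ℕ}

/-- The set `B_t` of finite big processing-time values occurring for machine type `t`. -/
def bigSet (ε T : ℝ) (p : Fin K → J → ℝ≥0∞) (t : Fin K) : Finset ℝ≥0∞ :=
  (Finset.univ.image (p t)).filter fun v => ENNReal.ofReal (ε ^ 2 * T) < v ∧ v ≠ ⊤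

/-- The set `S_t` of small processing-time values occurring for machine type `t`. -/
def smallSet (ε T : ℝ) (p : Fin K → J → ℝ≥0∞) (t : Fin K) : Finset ℝ≥0∞ :=
  (Finset.univ.image (p t)).filter fun v => v ≤ ENNReal.ofReal (ε ^ 2 * T)

/-- The size of a configuration `C` for the set of big values `B`. -/
def confSize (B : Finset ℝ≥0∞) (C : ℝ≥0∞ → ℕ) : ℝ≥0∞ := ∑ v ∈ B, (C v : ℝ≥0∞) * v

/-- `C` is a configuration for the set of big values `B`: it is supported on `B` and has
size at most `T̄ = (1+ε)T`. -/
def IsConf (ε T : ℝ) (B : Finset ℝ≥0∞) (C : ℝ≥0∞ → ℕ) : Prop :=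
  (∀ v ∉ B, C v = 0) ∧ confSize B C ≤ ENNReal.ofReal ((1 + ε) * T)

/-- Feasibility of the (relaxed) MILP(R): `z` are the configuration variables (supported
on the configurations for each type), `x` the fractional job-assignment variables
(vanishing when the processing time exceeds `T̄ = (1+ε)T`), subject to the constraints
(1)-(4) of the paper. -/
def MILPFeasible (ε T : ℝ) (p : Fin K → J → ℝ≥0∞) (m : Fin K → ℕ) (R : ℝ)
    (z : (ℝ≥0∞ → ℕ) → Fin K → ℝ≥0∞) (x : J → Fin K → ℝ≥0∞) : Prop :=
  (∀ C t, ¬ IsConf ε T (bigSet ε T p t) C → z C t = 0) ∧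
  (∀ j t, ENNReal.ofReal ((1 + ε) * T) < p t j → x j t = 0) ∧
  (∀ t, ∑' C : ℝ≥0∞ → ℕ, z C t = m t) ∧
  (∀ j, ∑ t, x j t = 1) ∧
  (∀ t, ∀ v ∈ bigSet ε T p t,
    ∑ j ∈ Finset.univ.filter (fun j => p t j = v), x j t ≤
      ∑' C : ℝ≥0∞ → ℕ, (C v : ℝ≥0∞) * z C t) ∧
  (∀ t, (∑' C : ℝ≥0∞ → ℕ, confSize (bigSet ε T p t) C * z C t) +
      ∑ v ∈ smallSet ε T p t, v * ∑ j ∈ Finset.univ.filter (fun j => p t j = v), x j t ≤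
      (m t : ℝ≥0∞) * ENNReal.ofReal R)

/-- The machines: `m t` machines of each type `t`. -/
def Machine (m : Fin K → ℕ) : Type := Σ t : Fin K, Fin (m t)

/-- The load of machine `i` under schedule `σ`. -/
def load (p : Fin K → J → ℝ≥0∞) (m : Fin K → ℕ) (σ : J → Machine m) (i : Machine m) :
    ℝ≥0∞ :=
  ∑ j ∈ Finset.univ.filter (fun j => σ j = i), p i.1 j

/-- Rounding a feasible MILP solution to an integral one, at the cost of
increasing the right-hand side from `T̄` to `T̄ + εT + ε²T` (the small values being of the
geometric form `ε²T/(1+ε)^i`). -/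
lemma geom_bound (ε T : ℝ) (hε : 0 < ε) (hT : 0 < T) (I : Finset ℕ) :
    ∑ i ∈ I, ENNReal.ofReal (ε ^ 2 * T / (1 + ε) ^ i) ≤ ENNReal.ofReal (ε * T + ε ^ 2 * T) := by
  rw [← ENNReal.ofReal_sum_of_nonneg (fun i _ => by positivity)]
  apply ENNReal.ofReal_le_ofReal
  have h1ε : (0:ℝ) < 1 + ε := by linarith
  have hr0 : (0:ℝ) ≤ (1+ε)⁻¹ := by positivity
  have hr1 : (1+ε)⁻¹ < 1 := by
    rw [inv_lt_one_iff₀]; right; linarith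
  have hsum : Summable (fun i : ℕ => ((1+ε)⁻¹) ^ i) := summable_geometric_of_lt_one hr0 hr1
  have htsum := tsum_geometric_of_lt_one hr0 hr1
  calc ∑ i ∈ I, ε ^ 2 * T / (1 + ε) ^ i
      = ε ^ 2 * T * ∑ i ∈ I, ((1+ε)⁻¹) ^ i := by
        rw [Finset.mul_sum]
        refine Finset.sum_congr rfl fun i _ => ?_
        rw [inv_pow]
        ring
    _ ≤ ε ^ 2 * T * (1 - (1+ε)⁻¹)⁻¹ := by
        refine mul_le_mul_of_nonneg_left ?_ (by positivity)
        exact (Summable.sum_le_tsum I (fun _ _ => by positivity) hsum).trans_eq htsum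
    _ = ε * T + ε ^ 2 * T := by
        rw [show (1:ℝ) - (1+ε)⁻¹ = ε / (1+ε) by field_simp; ring]
        field_simp

theorem MILP_rounding (ε T : ℝ) (hε : 0 < ε) (hε1 : ε ≤ 1) (hT : 0 < T)
    (p : Fin K → J → ℝ≥0∞) (hp : ∀ t j, p t j ≠ 0) (m : Fin K → ℕ)
    (hgeo : ∀ t, ∀ v ∈ smallSet ε T p t, ∃ i : ℕ,
      v = ENNReal.ofReal (ε ^ 2 * T / (1 + ε) ^ i))
    (hMILP : ∃ z x, MILPFeasible ε T p m ((1 + ε) * T) z x ∧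
      (∀ C t, ∃ n : ℕ, z C t = n)) :
    ∃ z x, MILPFeasible ε T p m ((1 + ε) * T + ε * T + ε ^ 2 * T) z x ∧
      (∀ C t, ∃ n : ℕ, z C t = n) ∧
      (∀ j t, ∃ n : ℕ, x j t = n) := by
  classical
  obtain ⟨z, x, ⟨hzconf, hxbig, hzm, hxone, hbigcap, hload⟩, hzint⟩ := hMILP
  have hTbne : ENNReal.ofReal ((1 + ε) * T) ≠ ⊤ := ENNReal.ofReal_ne_top
  -- the fractional amount of jobs with value v assigned to type t
  have hx1 : ∀ j t, x j t ≤ 1 := fun j t => by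
    rw [← hxone j]
    exact Finset.single_le_sum (fun _ _ => zero_le) (Finset.mem_univ t)
  have hfracne : ∀ t v, (∑ j ∈ Finset.univ.filter (fun j => p t j = v), x j t) ≠ ⊤ := by
    intro t v
    have h : (∑ j ∈ Finset.univ.filter (fun j => p t j = v), x j t) ≤
        ((Finset.univ.filter (fun j => p t j = v)).card : ℝ≥0∞) := by
      calc (∑ j ∈ Finset.univ.filter (fun j => p t j = v), x j t)
          ≤ ∑ _j ∈ Finset.univ.filter (fun j => p t j = v), (1:ℝ≥0∞) :=
            Finset.sum_le_sum fun j _ => hx1 j t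
        _ = _ := by simp
    exact ne_top_of_le_ne_top (ENNReal.natCast_ne_top _) h
  -- the tsums in the big constraints are natural numbers
  have hnat : ∀ t v, ∃ n : ℕ, (∑' C : ℝ≥0∞ → ℕ, (C v : ℝ≥0∞) * z C t) = n := by
    intro t v
    have hfin : {C : ℝ≥0∞ → ℕ | (1:ℝ≥0∞) ≤ z C t}.Finite :=
      ENNReal.finite_const_le_of_tsum_ne_top
        (by rw [hzm t]; exact ENNReal.natCast_ne_top _) one_ne_zero
    choose nz hnz using fun C => hzint C t
    refine ⟨∑ C ∈ hfin.toFinset, C v * nz C, ?_⟩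
    rw [tsum_eq_sum (s := hfin.toFinset) ?_]
    · push_cast
      exact Finset.sum_congr rfl fun C _ => by rw [hnz C]
    · intro C hC
      have hz0 : z C t = 0 := by
        by_contra h
        have h1 : nz C ≠ 0 := fun hh => h (by rw [hnz C, hh]; simp)
        have : (1:ℝ≥0∞) ≤ z C t := by
          rw [hnz C]
          exact_mod_cast Nat.one_le_iff_ne_zero.mpr h1
        exact hC (hfin.mem_toFinset.mpr this)
      rw [hz0, mul_zero]
  choose nb hnb using hnat
  -- capacities
  set cap : Fin K → ℝ≥0∞ → ℕ := fun t v =>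
    if ENNReal.ofReal (ε ^ 2 * T) < v then nb t v
    else ⌈(∑ j ∈ Finset.univ.filter (fun j => p t j = v), x j t).toReal⌉₊ with hcapdef
  have hcapBig : ∀ t v, ENNReal.ofReal (ε ^ 2 * T) < v →
      (cap t v : ℝ≥0∞) = ∑' C : ℝ≥0∞ → ℕ, (C v : ℝ≥0∞) * z C t := by
    intro t v h
    simp only [hcapdef]
    rw [if_pos h]
    exact (hnb t v).symm
  have hcapSmall_ge : ∀ t v, ¬ ENNReal.ofReal (ε ^ 2 * T) < v →
      (∑ j ∈ Finset.univ.filter (fun j => p t j = v), x j t) ≤ (cap t v : ℝ≥0∞) := by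
    intro t v h
    calc (∑ j ∈ Finset.univ.filter (fun j => p t j = v), x j t)
        = ENNReal.ofReal (∑ j ∈ Finset.univ.filter (fun j => p t j = v), x j t).toReal :=
          (ENNReal.ofReal_toReal (hfracne t v)).symm
      _ ≤ ENNReal.ofReal (⌈(∑ j ∈ Finset.univ.filter (fun j => p t j = v), x j t).toReal⌉₊ : ℝ) :=
          ENNReal.ofReal_le_ofReal (Nat.le_ceil _)
      _ = (cap t v : ℝ≥0∞) := by
          rw [ENNReal.ofReal_natCast]
          simp only [hcapdef]
          rw [if_neg h]
  have hcapSmall_le : ∀ t v, ¬ ENNReal.ofReal (ε ^ 2 * T) < v →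
      (cap t v : ℝ≥0∞) ≤ (∑ j ∈ Finset.univ.filter (fun j => p t j = v), x j t) + 1 := by
    intro t v h
    simp only [hcapdef]
    rw [if_neg h]
    calc ((⌈(∑ j ∈ Finset.univ.filter (fun j => p t j = v), x j t).toReal⌉₊ : ℝ≥0∞))
        = ENNReal.ofReal (⌈(∑ j ∈ Finset.univ.filter (fun j => p t j = v), x j t).toReal⌉₊ : ℝ) :=
          (ENNReal.ofReal_natCast _).symm
      _ ≤ ENNReal.ofReal ((∑ j ∈ Finset.univ.filter (fun j => p t j = v), x j t).toReal + 1) :=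
          ENNReal.ofReal_le_ofReal (Nat.ceil_lt_add_one ENNReal.toReal_nonneg).le
      _ ≤ _ := by
          rw [ENNReal.ofReal_add ENNReal.toReal_nonneg zero_le_one]
          simp [ENNReal.ofReal_toReal (hfracne t v)]
  have hcapSmall_zero : ∀ t v, ¬ ENNReal.ofReal (ε ^ 2 * T) < v →
      (∑ j ∈ Finset.univ.filter (fun j => p t j = v), x j t) = 0 → cap t v = 0 := by
    intro t v h h0
    simp only [hcapdef]
    rw [if_neg h, h0]
    simp
  -- positivity of capacities at used values
  have hcap_pos : ∀ t j, x j t ≠ 0 → p t j ≤ ENNReal.ofReal ((1 + ε) * T) ∧ 0 < cap t (p t j) := by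
    intro t j hxj
    have hple : p t j ≤ ENNReal.ofReal ((1 + ε) * T) := by
      by_contra h
      exact hxj (hxbig j t (lt_of_not_ge h))
    refine ⟨hple, ?_⟩
    have hjmem : j ∈ Finset.univ.filter (fun j' => p t j' = p t j) :=
      Finset.mem_filter.mpr ⟨Finset.mem_univ j, rfl⟩
    have hxfrac : x j t ≤ ∑ j' ∈ Finset.univ.filter (fun j' => p t j' = p t j), x j' t :=
      Finset.single_le_sum (f := fun j' => x j' t) (fun _ _ => zero_le) hjmem
    by_cases hb : ENNReal.ofReal (ε ^ 2 * T) < p t j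
    · have hvmem : p t j ∈ bigSet ε T p t := by
        refine Finset.mem_filter.mpr ⟨Finset.mem_image.mpr ⟨j, Finset.mem_univ j, rfl⟩, hb, ?_⟩
        exact ne_top_of_le_ne_top hTbne hple
      have h1 : (0:ℝ≥0∞) < (cap t (p t j) : ℝ≥0∞) := by
        rw [hcapBig t _ hb]
        exact lt_of_lt_of_le (pos_iff_ne_zero.mpr hxj) (hxfrac.trans (hbigcap t _ hvmem))
      exact_mod_cast h1
    · have h1 : (0:ℝ≥0∞) < (cap t (p t j) : ℝ≥0∞) :=
        lt_of_lt_of_le (pos_iff_ne_zero.mpr hxj) (hxfrac.trans (hcapSmall_ge t _ hb))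
      exact_mod_cast h1
  -- the slots
  set slot : J → Finset (Fin K × ℝ≥0∞ × ℕ) := fun j =>
    Finset.univ.biUnion fun t =>
      if p t j ≤ ENNReal.ofReal ((1 + ε) * T) then
        (Finset.range (cap t (p t j))).image (fun k => (t, p t j, k))
      else ∅
    with hslotdef
  have hslot_mem : ∀ (j : J) (a : Fin K × ℝ≥0∞ × ℕ), a ∈ slot j ↔
      (p a.1 j ≤ ENNReal.ofReal ((1 + ε) * T) ∧ a.2.1 = p a.1 j ∧ a.2.2 < cap a.1 (p a.1 j)) := by
    intro j a
    rw [hslotdef]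
    simp only [Finset.mem_biUnion, Finset.mem_univ, true_and]
    constructor
    · rintro ⟨t, ht⟩
      split_ifs at ht with h
      · simp only [Finset.mem_image, Finset.mem_range] at ht
        obtain ⟨k, hk, rfl⟩ := ht
        exact ⟨h, rfl, hk⟩
      · simp at ht
    · rintro ⟨h1, h2, h3⟩
      refine ⟨a.1, ?_⟩
      rw [if_pos h1]
      simp only [Finset.mem_image, Finset.mem_range]
      exact ⟨a.2.2, h3, by rw [← h2]⟩
  -- Hall's condition
  have hall : ∀ S : Finset J, S.card ≤ (S.biUnion slot).card := by
    intro S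
    set B := S.biUnion slot with hB
    set P : Finset (Fin K × ℝ≥0∞) := B.image (fun a => (a.1, a.2.1)) with hPdef
    have hPmem : ∀ q ∈ P, (∃ j ∈ S, q.2 = p q.1 j) ∧ q.2 ≤ ENNReal.ofReal ((1 + ε) * T) ∧
        ∀ k, k < cap q.1 q.2 → (q.1, q.2, k) ∈ B := by
      intro q hq
      obtain ⟨a, haB, rfl⟩ := Finset.mem_image.1 hq
      obtain ⟨j, hjS, haj⟩ := Finset.mem_biUnion.1 haB
      obtain ⟨h1, h2, h3⟩ := (hslot_mem j a).1 haj
      refine ⟨⟨j, hjS, h2⟩, h2 ▸ h1, fun k hk => ?_⟩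
      refine Finset.mem_biUnion.2 ⟨j, hjS, (hslot_mem j (a.1, a.2.1, k)).2 ⟨h1, h2, ?_⟩⟩
      show k < cap a.1 (p a.1 j)
      rw [← h2]
      exact hk
    -- the biUnion decomposes into disjoint blocks of full capacity
    have hdisj : ∀ q1 ∈ P, ∀ q2 ∈ P, q1 ≠ q2 →
        Disjoint ((Finset.range (cap q1.1 q1.2)).image (fun k => (q1.1, q1.2, k)))
                 ((Finset.range (cap q2.1 q2.2)).image (fun k => (q2.1, q2.2, k))) := by
      intro q1 _ q2 _ hne
      rw [Finset.disjoint_left]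
      intro a ha1 ha2
      simp only [Finset.mem_image, Finset.mem_range] at ha1 ha2
      obtain ⟨k1, -, rfl⟩ := ha1
      obtain ⟨k2, -, heq⟩ := ha2
      simp only [Prod.mk.injEq] at heq
      exact hne (Prod.ext heq.1.symm heq.2.1.symm)
    have hBeq : B = P.biUnion
        (fun q => (Finset.range (cap q.1 q.2)).image (fun k => (q.1, q.2, k))) := by
      apply Finset.Subset.antisymm
      · intro a ha
        have haP : (a.1, a.2.1) ∈ P := Finset.mem_image.mpr ⟨a, ha, rfl⟩
        obtain ⟨j, hjS, haj⟩ := Finset.mem_biUnion.1 ha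
        obtain ⟨h1, h2, h3⟩ := (hslot_mem j a).1 haj
        refine Finset.mem_biUnion.2 ⟨(a.1, a.2.1), haP, ?_⟩
        simp only [Finset.mem_image, Finset.mem_range]
        refine ⟨a.2.2, ?_, rfl⟩
        show a.2.2 < cap a.1 a.2.1
        rw [h2]
        exact h3
      · intro a ha
        simp only [Finset.mem_biUnion, Finset.mem_image, Finset.mem_range] at ha
        obtain ⟨q, hq, k, hk, rfl⟩ := ha
        exact (hPmem q hq).2.2 k hk
    have hBcard : B.card = ∑ q ∈ P, cap q.1 q.2 := by
      rw [hBeq, Finset.card_biUnion hdisj]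
      refine Finset.sum_congr rfl fun q _ => ?_
      rw [Finset.card_image_of_injective _ (fun k1 k2 h => by simpa using h), Finset.card_range]
    -- the counting argument
    have key : (S.card : ℝ≥0∞) ≤ ∑ q ∈ P, (cap q.1 q.2 : ℝ≥0∞) := by
      have h1 : (S.card : ℝ≥0∞) = ∑ t : Fin K, ∑ j ∈ S, x j t := by
        rw [← Finset.sum_comm]
        calc (S.card : ℝ≥0∞) = ∑ _j ∈ S, 1 := by simp
          _ = ∑ j ∈ S, ∑ t, x j t := Finset.sum_congr rfl fun j _ => (hxone j).symm
      rw [h1]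
      have h2 : ∀ t : Fin K, ∑ j ∈ S, x j t ≤
          ∑ q ∈ P, (if q.1 = t then (cap q.1 q.2 : ℝ≥0∞) else 0) := by
        intro t
        have hmem' : ∀ j ∈ S, x j t ≠ 0 → ((t, p t j) : Fin K × ℝ≥0∞) ∈ P := by
          intro j hjS hxj
          obtain ⟨hple, hpos⟩ := hcap_pos t j hxj
          refine Finset.mem_image.2 ⟨(t, p t j, 0), ?_, rfl⟩
          exact Finset.mem_biUnion.2 ⟨j, hjS, (hslot_mem j (t, p t j, 0)).2 ⟨hple, rfl, hpos⟩⟩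
        have hsub : ∑ j ∈ S, x j t =
            ∑ j ∈ S.filter (fun j => ((t, p t j) : Fin K × ℝ≥0∞) ∈ P), x j t := by
          rw [Finset.sum_filter]
          refine Finset.sum_congr rfl fun j hj => ?_
          by_cases hmemP : ((t, p t j) : Fin K × ℝ≥0∞) ∈ P
          · rw [if_pos hmemP]
          · rw [if_neg hmemP]
            by_contra hne
            exact hmemP (hmem' j hj hne)
        rw [hsub, ← Finset.sum_fiberwise_of_maps_to (g := fun j => ((t, p t j) : Fin K × ℝ≥0∞))
            (fun j hj => (Finset.mem_filter.1 hj).2) (fun j => x j t)]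
        refine Finset.sum_le_sum fun q hq => ?_
        by_cases hqt : q.1 = t
        · rw [if_pos hqt]
          have hss : (S.filter (fun j => ((t, p t j) : Fin K × ℝ≥0∞) ∈ P)).filter
              (fun j => ((t, p t j) : Fin K × ℝ≥0∞) = q) ⊆
              Finset.univ.filter (fun j => p t j = q.2) := by
            intro j hj
            have h := (Finset.mem_filter.1 hj).2
            refine Finset.mem_filter.2 ⟨Finset.mem_univ j, ?_⟩
            rw [← h]
          calc ∑ j ∈ (S.filter (fun j => ((t, p t j) : Fin K × ℝ≥0∞) ∈ P)).filter
                (fun j => ((t, p t j) : Fin K × ℝ≥0∞) = q), x j t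
              ≤ ∑ j ∈ Finset.univ.filter (fun j => p t j = q.2), x j t :=
                Finset.sum_le_sum_of_subset hss
            _ ≤ (cap q.1 q.2 : ℝ≥0∞) := by
                rw [hqt]
                by_cases hb : ENNReal.ofReal (ε ^ 2 * T) < q.2
                · have hq2 : q.2 ∈ bigSet ε T p t := by
                    obtain ⟨⟨j', hj'S, hj'⟩, hle, -⟩ := hPmem q hq
                    refine Finset.mem_filter.2 ⟨Finset.mem_image.2 ⟨j', Finset.mem_univ j', ?_⟩,
                      hb, ne_top_of_le_ne_top hTbne hle⟩
                    rw [hj', hqt]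
                  rw [hcapBig t q.2 hb]
                  exact hbigcap t q.2 hq2
                · exact hcapSmall_ge t q.2 hb
        · rw [if_neg hqt]
          refine le_of_eq (Finset.sum_eq_zero fun j hj => ?_)
          have h := (Finset.mem_filter.1 hj).2
          exact absurd (congrArg Prod.fst h).symm hqt
      calc ∑ t : Fin K, ∑ j ∈ S, x j t
          ≤ ∑ t : Fin K, ∑ q ∈ P, (if q.1 = t then (cap q.1 q.2 : ℝ≥0∞) else 0) :=
            Finset.sum_le_sum fun t _ => h2 t
        _ = ∑ q ∈ P, ∑ t : Fin K, (if q.1 = t then (cap q.1 q.2 : ℝ≥0∞) else 0) :=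
            Finset.sum_comm
        _ = ∑ q ∈ P, (cap q.1 q.2 : ℝ≥0∞) :=
            Finset.sum_congr rfl fun q _ => by rw [Finset.sum_ite_eq]; simp
    have key2 : (S.card : ℝ≥0∞) ≤ ((∑ q ∈ P, cap q.1 q.2 : ℕ) : ℝ≥0∞) := by
      push_cast
      exact key
    have key3 : S.card ≤ ∑ q ∈ P, cap q.1 q.2 := by exact_mod_cast key2
    rw [hBcard]
    exact key3
  obtain ⟨f, hfinj, hfmem⟩ := (Finset.all_card_le_biUnion_card_iff_exists_injective slot).1 hall
  -- counts are bounded by capacities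
  have hcnt : ∀ t v, (∑ j ∈ Finset.univ.filter (fun j => p t j = v),
      (if (f j).1 = t then (1:ℝ≥0∞) else 0)) ≤ (cap t v : ℝ≥0∞) := by
    intro t v
    have h1 : (∑ j ∈ Finset.univ.filter (fun j => p t j = v),
        (if (f j).1 = t then (1:ℝ≥0∞) else 0)) =
        (((Finset.univ.filter (fun j => p t j = v)).filter (fun j => (f j).1 = t)).card : ℝ≥0∞) := by
      rw [Finset.sum_boole]
    rw [h1]
    have h2 : ((Finset.univ.filter (fun j => p t j = v)).filter (fun j => (f j).1 = t)).card ≤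
        cap t v := by
      rw [← Finset.card_range (cap t v)]
      refine Finset.card_le_card_of_injOn (fun j => (f j).2.2) ?_ ?_
      · intro j hj
        obtain ⟨hj1, hft⟩ := Finset.mem_filter.1 hj
        have hpv : p t j = v := (Finset.mem_filter.1 hj1).2
        have h3 := ((hslot_mem j (f j)).1 (hfmem j)).2.2
        rw [Finset.mem_coe, Finset.mem_range]
        rw [hft, hpv] at h3
        exact h3
      · intro j1 hj1 j2 hj2 heq
        have hj1' := Finset.mem_filter.1 (Finset.mem_coe.1 hj1)
        have hj2' := Finset.mem_filter.1 (Finset.mem_coe.1 hj2)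
        have hp1 : p t j1 = v := (Finset.mem_filter.1 hj1'.1).2
        have hp2 : p t j2 = v := (Finset.mem_filter.1 hj2'.1).2
        have hf1 : (f j1).1 = t := hj1'.2
        have hf2 : (f j2).1 = t := hj2'.2
        have e1 := ((hslot_mem j1 (f j1)).1 (hfmem j1)).2.1
        have e2 := ((hslot_mem j2 (f j2)).1 (hfmem j2)).2.1
        apply hfinj
        have hsnd : (f j1).2 = (f j2).2 := by
          refine Prod.ext ?_ ?_
          · rw [e1, e2, hf1, hf2, hp1, hp2]
          · exact heq
        exact Prod.ext (by rw [hf1, hf2]) hsnd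
    exact_mod_cast h2
  refine ⟨z, fun j t => if (f j).1 = t then 1 else 0,
    ⟨hzconf, ?_, hzm, ?_, ?_, ?_⟩, hzint, fun j t => ⟨if (f j).1 = t then 1 else 0, by by_cases h : (f j).1 = t <;> simp [h]⟩⟩
  · -- vanishing above the threshold
    intro j t h
    show (if (f j).1 = t then (1:ℝ≥0∞) else 0) = 0
    rw [if_neg]
    intro hft
    have := ((hslot_mem j (f j)).1 (hfmem j)).1
    rw [hft] at this
    exact absurd h (not_lt.mpr this)
  · -- assignment constraint
    intro j
    simp [Finset.sum_ite_eq]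
  · -- big constraint
    intro t v hv
    have hvbig : ENNReal.ofReal (ε ^ 2 * T) < v := (Finset.mem_filter.1 hv).2.1
    rw [← hcapBig t v hvbig]
    exact hcnt t v
  · -- load constraint
    intro t
    show (∑' C : ℝ≥0∞ → ℕ, confSize (bigSet ε T p t) C * z C t) +
        ∑ v ∈ smallSet ε T p t, v * ∑ j ∈ Finset.univ.filter (fun j => p t j = v),
          (if (f j).1 = t then (1:ℝ≥0∞) else 0) ≤
        (m t : ℝ≥0∞) * ENNReal.ofReal ((1 + ε) * T + ε * T + ε ^ 2 * T)
    have hsmall_not : ∀ v ∈ smallSet ε T p t, ¬ ENNReal.ofReal (ε ^ 2 * T) < v :=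
      fun v hv => not_lt.mpr (Finset.mem_filter.1 hv).2
    by_cases hm : m t = 0
    · -- no machines of this type: everything vanishes
      have hz0 : ∀ C, z C t = 0 := by
        have h := hzm t
        rw [hm] at h
        exact fun C => ENNReal.tsum_eq_zero.1 (by simpa using h) C
      have hA : (∑' C : ℝ≥0∞ → ℕ, confSize (bigSet ε T p t) C * z C t) = 0 :=
        ENNReal.tsum_eq_zero.2 fun C => by rw [hz0 C, mul_zero]
      have hfrac0 : ∀ v ∈ smallSet ε T p t,
          (∑ j ∈ Finset.univ.filter (fun j => p t j = v), x j t) = 0 := by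
        intro v hv
        have h := hload t
        rw [hm] at h
        simp only [Nat.cast_zero, zero_mul] at h
        rw [nonpos_iff_eq_zero, add_eq_zero] at h
        have h2 := h.2
        rw [Finset.sum_eq_zero_iff] at h2
        have h3 := h2 v hv
        have hv0 : v ≠ 0 := by
          obtain ⟨jv, -, hjv⟩ := Finset.mem_image.1 (Finset.mem_filter.1 hv).1
          rw [← hjv]
          exact hp t jv
        exact (mul_eq_zero.1 h3).resolve_left hv0
      have hcnt0 : ∀ v ∈ smallSet ε T p t,
          (∑ j ∈ Finset.univ.filter (fun j => p t j = v),
            (if (f j).1 = t then (1:ℝ≥0∞) else 0)) = 0 := by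
        intro v hv
        have h := hcnt t v
        rw [hcapSmall_zero t v (hsmall_not v hv) (hfrac0 v hv)] at h
        simpa using h
      have hB : ∑ v ∈ smallSet ε T p t, v * ∑ j ∈ Finset.univ.filter (fun j => p t j = v),
          (if (f j).1 = t then (1:ℝ≥0∞) else 0) = 0 :=
        Finset.sum_eq_zero fun v hv => by rw [hcnt0 v hv, mul_zero]
      rw [hA, hB, add_zero]
      exact zero_le
    · -- at least one machine of this type
      have hm1 : (1:ℝ≥0∞) ≤ (m t : ℝ≥0∞) := by
        exact_mod_cast Nat.one_le_iff_ne_zero.mpr hm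
      -- the geometric bound on sum of the used small values
      have hgeoB : ∑ v ∈ (smallSet ε T p t).filter
            (fun v => (∑ j ∈ Finset.univ.filter (fun j => p t j = v), x j t) ≠ 0), v ≤
          ENNReal.ofReal (ε * T + ε ^ 2 * T) := by
        set g : ℝ≥0∞ → ℕ := fun v =>
          if h : ∃ i : ℕ, v = ENNReal.ofReal (ε ^ 2 * T / (1 + ε) ^ i) then h.choose else 0
          with hgdef
        set s := (smallSet ε T p t).filter
          (fun v => (∑ j ∈ Finset.univ.filter (fun j => p t j = v), x j t) ≠ 0) with hs
        have hgv : ∀ v ∈ s, v = ENNReal.ofReal (ε ^ 2 * T / (1 + ε) ^ (g v)) := by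
          intro v hv
          have h := hgeo t v (Finset.mem_filter.1 hv).1
          rw [hgdef]
          simp only [dif_pos h]
          exact h.choose_spec
        calc ∑ v ∈ s, v
            = ∑ v ∈ s, ENNReal.ofReal (ε ^ 2 * T / (1 + ε) ^ (g v)) :=
              Finset.sum_congr rfl hgv
          _ = ∑ i ∈ s.image g, ENNReal.ofReal (ε ^ 2 * T / (1 + ε) ^ i) :=
              (Finset.sum_image (f := fun i => ENNReal.ofReal (ε ^ 2 * T / (1 + ε) ^ i))
                (fun v hv w hw hgw => by rw [hgv v hv, hgv w hw, hgw])).symm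
          _ ≤ _ := geom_bound ε T hε hT _
      calc (∑' C : ℝ≥0∞ → ℕ, confSize (bigSet ε T p t) C * z C t) +
          ∑ v ∈ smallSet ε T p t, v * ∑ j ∈ Finset.univ.filter (fun j => p t j = v),
            (if (f j).1 = t then (1:ℝ≥0∞) else 0)
          ≤ (∑' C : ℝ≥0∞ → ℕ, confSize (bigSet ε T p t) C * z C t) +
            ∑ v ∈ smallSet ε T p t, v * (cap t v : ℝ≥0∞) :=
            add_le_add_right (Finset.sum_le_sum fun v _ => mul_le_mul_right (hcnt t v) v) _
        _ ≤ (∑' C : ℝ≥0∞ → ℕ, confSize (bigSet ε T p t) C * z C t) +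
            ((∑ v ∈ smallSet ε T p t, v * ∑ j ∈ Finset.univ.filter (fun j => p t j = v), x j t) +
             ∑ v ∈ (smallSet ε T p t).filter
               (fun v => (∑ j ∈ Finset.univ.filter (fun j => p t j = v), x j t) ≠ 0), v) := by
            refine add_le_add_right ?_ _
            have hstep : ∀ v ∈ smallSet ε T p t, v * (cap t v : ℝ≥0∞) ≤
                v * (∑ j ∈ Finset.univ.filter (fun j => p t j = v), x j t) +
                (if (∑ j ∈ Finset.univ.filter (fun j => p t j = v), x j t) ≠ 0 then v else 0) := by
              intro v hv
              by_cases h0 : (∑ j ∈ Finset.univ.filter (fun j => p t j = v), x j t) = 0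
              · rw [hcapSmall_zero t v (hsmall_not v hv) h0]
                simp [h0]
              · rw [if_pos h0]
                calc v * (cap t v : ℝ≥0∞)
                    ≤ v * ((∑ j ∈ Finset.univ.filter (fun j => p t j = v), x j t) + 1) :=
                      mul_le_mul_right (hcapSmall_le t v (hsmall_not v hv)) v
                  _ = _ := by rw [mul_add, mul_one]
            calc ∑ v ∈ smallSet ε T p t, v * (cap t v : ℝ≥0∞)
                ≤ ∑ v ∈ smallSet ε T p t,
                    (v * (∑ j ∈ Finset.univ.filter (fun j => p t j = v), x j t) +
                      (if (∑ j ∈ Finset.univ.filter (fun j => p t j = v), x j t) ≠ 0 then v else 0)) :=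
                  Finset.sum_le_sum hstep
              _ = _ := by rw [Finset.sum_add_distrib, Finset.sum_filter]
        _ ≤ (∑' C : ℝ≥0∞ → ℕ, confSize (bigSet ε T p t) C * z C t) +
            ((∑ v ∈ smallSet ε T p t, v * ∑ j ∈ Finset.univ.filter (fun j => p t j = v), x j t) +
             ENNReal.ofReal (ε * T + ε ^ 2 * T)) :=
            add_le_add_right (add_le_add_right hgeoB _) _
        _ = ((∑' C : ℝ≥0∞ → ℕ, confSize (bigSet ε T p t) C * z C t) +
            (∑ v ∈ smallSet ε T p t, v * ∑ j ∈ Finset.univ.filter (fun j => p t j = v), x j t)) +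
             ENNReal.ofReal (ε * T + ε ^ 2 * T) := by rw [add_assoc]
        _ ≤ (m t : ℝ≥0∞) * ENNReal.ofReal ((1 + ε) * T) + ENNReal.ofReal (ε * T + ε ^ 2 * T) :=
            add_le_add_left (hload t) _
        _ ≤ (m t : ℝ≥0∞) * ENNReal.ofReal ((1 + ε) * T + ε * T + ε ^ 2 * T) := by
            rw [show (1 + ε) * T + ε * T + ε ^ 2 * T = (1 + ε) * T + (ε * T + ε ^ 2 * T) by ring]
            rw [ENNReal.ofReal_add (p := (1 + ε) * T) (q := ε * T + ε ^ 2 * T)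
              (by positivity) (by positivity), mul_add]
            exact add_le_add_right (le_mul_of_one_le_left zero_le hm1) _
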